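/- arXiv:2402.09345 — 2 statements merged into one kernel-verified Lean document; each statement's English description precedes it below -/
import Mathlib

section
/- Let X be a measurable space and S a standard Borel space, let μ be a probability measure on X, let κ be a Markov kernel from X to S, and let ν = μ.bind κ be the mixture marginal of κ under μ (so ν(A) = ∫ κ(x)(A) dμ(x)). Then for every probability measure r on S, ∫ KL(κ(x) ‖ r) dμ(x) = ∫ KL(κ(x) ‖ ν) dμ(x) + KL(ν ‖ r), as an identity in [0,∞]. In particular, the expected KL divergence of the encoder κ to any fixed variational prior r decomposes as the mutual-information term plus the approximation error KL(ν ‖ r). -/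
open MeasureTheory ProbabilityTheory
open scoped ENNReal NNReal

open scoped Classical in
/-- Kullback–Leibler divergence between measures, as in Mathlib's
`InformationTheory.klDiv` (absent from this Mathlib version). -/
noncomputable def klDiv {α : Type*} [MeasurableSpace α] (μ ν : Measure α) : ℝ≥0∞ :=
  if μ ≪ ν ∧ Integrable (llr μ ν) μ then ENNReal.ofReal (∫ x, llr μ ν x ∂μ) else ⊤

open Real
namespace KLaux

variable {α : Type*} [MeasurableSpace α] {p q : Measure α}

lemma ofReal_max_zero (a : ℝ) : ENNReal.ofReal (max a 0) = ENNReal.ofReal a := by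
  rcases le_total a 0 with h | h
  · rw [max_eq_right h, ENNReal.ofReal_zero, ENNReal.ofReal_of_nonpos h]
  · rw [max_eq_left h]

/-- L2: the negative part of the llr has lintegral at most 1. -/
lemma lintegral_ofReal_neg_llr_le [IsProbabilityMeasure p] [IsProbabilityMeasure q]
    (h : p ≪ q) : ∫⁻ x, ENNReal.ofReal (- llr p q x) ∂p ≤ 1 := by
  calc ∫⁻ x, ENNReal.ofReal (- llr p q x) ∂p
      ≤ ∫⁻ x, q.rnDeriv p x ∂p := by
        refine lintegral_mono_ae ?_
        filter_upwards [exp_neg_llr h] with x hx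
        calc ENNReal.ofReal (- llr p q x)
            ≤ ENNReal.ofReal (Real.exp (- llr p q x)) := by
              apply ENNReal.ofReal_le_ofReal
              have := Real.add_one_le_exp (- llr p q x); linarith
          _ = ENNReal.ofReal ((q.rnDeriv p x).toReal) := by rw [hx]
          _ ≤ q.rnDeriv p x := ENNReal.ofReal_toReal_le
    _ ≤ q Set.univ := Measure.lintegral_rnDeriv_le
    _ = 1 := measure_univ

/-- L1: Gibbs' inequality. -/
lemma integral_llr_nonneg [IsProbabilityMeasure p] [IsProbabilityMeasure q]
    (h : p ≪ q) (hint : Integrable (llr p q) p) : 0 ≤ ∫ x, llr p q x ∂p := by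
  have hZm : Measurable fun x => (q.rnDeriv p x).toReal :=
    (Measure.measurable_rnDeriv q p).ennreal_toReal
  have hZint : Integrable (fun x => (q.rnDeriv p x).toReal) p :=
    Measure.integrable_toReal_rnDeriv
  have hZle : ∫ x, (q.rnDeriv p x).toReal ∂p ≤ 1 := by
    rw [integral_toReal (Measure.measurable_rnDeriv q p).aemeasurable
      (Measure.rnDeriv_lt_top q p)]
    have h1 : ∫⁻ x, q.rnDeriv p x ∂p ≤ 1 := le_trans Measure.lintegral_rnDeriv_le
      (by simp)
    calc (∫⁻ x, q.rnDeriv p x ∂p).toReal ≤ (1 : ℝ≥0∞).toReal := by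
          exact ENNReal.toReal_mono (by simp) h1
      _ = 1 := by simp
  have key : ∫ x, (- llr p q x) ∂p ≤ ∫ x, ((q.rnDeriv p x).toReal - 1) ∂p := by
    refine integral_mono_ae hint.neg (hZint.sub (integrable_const 1)) ?_
    filter_upwards [exp_neg_llr h] with x hx
    have h2 := Real.add_one_le_exp (- llr p q x)
    rw [hx] at h2
    show - llr p q x ≤ (q.rnDeriv p x).toReal - 1
    linarith
  rw [integral_neg] at key
  rw [integral_sub hZint (integrable_const 1), integral_const] at key
  simp at key
  linarith

/-- L3 -/
lemma integrable_llr_iff_lintegral_ne_top [IsProbabilityMeasure p] [IsProbabilityMeasure q]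
    (h : p ≪ q) :
    Integrable (llr p q) p ↔ ∫⁻ x, ENNReal.ofReal (llr p q x) ∂p ≠ ⊤ := by
  constructor
  · intro hi
    have h2 := hi.2
    rw [hasFiniteIntegral_iff_norm] at h2
    refine ne_top_of_le_ne_top h2.ne (lintegral_mono fun x => ?_)
    exact ENNReal.ofReal_le_ofReal (by rw [Real.norm_eq_abs]; exact le_abs_self _)
  · intro hfin
    refine ⟨(measurable_llr _ _).aestronglyMeasurable, ?_⟩
    rw [hasFiniteIntegral_iff_norm]
    have hb : ∀ x, ENNReal.ofReal ‖llr p q x‖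
        ≤ ENNReal.ofReal (llr p q x) + ENNReal.ofReal (- llr p q x) := by
      intro x
      rcases le_total 0 (llr p q x) with hx | hx
      · rw [Real.norm_eq_abs, abs_of_nonneg hx]; exact le_add_of_le_of_nonneg le_rfl zero_le
      · rw [Real.norm_eq_abs, abs_of_nonpos hx]
        exact le_add_of_nonneg_of_le zero_le le_rfl
    calc ∫⁻ x, ENNReal.ofReal ‖llr p q x‖ ∂p
        ≤ ∫⁻ x, (ENNReal.ofReal (llr p q x) + ENNReal.ofReal (- llr p q x)) ∂p :=
          lintegral_mono hb
      _ = ∫⁻ x, ENNReal.ofReal (llr p q x) ∂p + ∫⁻ x, ENNReal.ofReal (- llr p q x) ∂p :=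
          lintegral_add_left ((measurable_llr _ _).ennreal_ofReal) _
      _ < ⊤ := ENNReal.add_lt_top.2 ⟨hfin.lt_top,
          (lintegral_ofReal_neg_llr_le h).trans_lt (by simp)⟩

/-- L4a -/
lemma klDiv_le_lintegral_ofReal [IsProbabilityMeasure p] [IsProbabilityMeasure q]
    (h : p ≪ q) :
    klDiv p q ≤ ∫⁻ x, ENNReal.ofReal (llr p q x) ∂p := by
  by_cases hint : Integrable (llr p q) p
  · rw [klDiv, if_pos ⟨h, hint⟩]
    calc ENNReal.ofReal (∫ x, llr p q x ∂p)
        ≤ ENNReal.ofReal (∫ x, max (llr p q x) 0 ∂p) := by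
          apply ENNReal.ofReal_le_ofReal
          exact integral_mono hint hint.pos_part fun x => le_max_left _ _
      _ = ∫⁻ x, ENNReal.ofReal (max (llr p q x) 0) ∂p :=
          ofReal_integral_eq_lintegral_ofReal hint.pos_part
            (Filter.Eventually.of_forall fun x => le_max_right _ _)
      _ = ∫⁻ x, ENNReal.ofReal (llr p q x) ∂p := by
          simp_rw [ofReal_max_zero]
  · rw [(integrable_llr_iff_lintegral_ne_top h).not.mp hint |> not_ne_iff.mp]
    exact le_top

/-- L4b -/
lemma lintegral_ofReal_le_klDiv_add_one [IsProbabilityMeasure p] [IsProbabilityMeasure q]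
    (h : p ≪ q) :
    ∫⁻ x, ENNReal.ofReal (llr p q x) ∂p ≤ klDiv p q + 1 := by
  by_cases hint : Integrable (llr p q) p
  · have hmax : ∀ x, max (llr p q x) 0 = llr p q x + max (- llr p q x) 0 := by
      intro x; rcases le_total 0 (llr p q x) with hx | hx
      · rw [max_eq_left hx, max_eq_right (by linarith), add_zero]
      · rw [max_eq_right hx, max_eq_left (by linarith)]; ring
    have hnegpp : Integrable (fun x => max (- llr p q x) 0) p := by
      simpa using hint.neg.pos_part
    calc ∫⁻ x, ENNReal.ofReal (llr p q x) ∂p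
        = ∫⁻ x, ENNReal.ofReal (max (llr p q x) 0) ∂p := by simp_rw [ofReal_max_zero]
      _ = ENNReal.ofReal (∫ x, max (llr p q x) 0 ∂p) :=
          (ofReal_integral_eq_lintegral_ofReal hint.pos_part
            (Filter.Eventually.of_forall fun x => le_max_right _ _)).symm
      _ = ENNReal.ofReal (∫ x, llr p q x ∂p + ∫ x, max (- llr p q x) 0 ∂p) := by
          rw [← integral_add hint hnegpp]
          congr 1
          exact integral_congr_ae (Filter.Eventually.of_forall fun x => hmax x)
      _ ≤ ENNReal.ofReal (∫ x, llr p q x ∂p) + ENNReal.ofReal (∫ x, max (- llr p q x) 0 ∂p) :=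
          ENNReal.ofReal_add_le
      _ ≤ klDiv p q + 1 := by
          refine add_le_add ?_ ?_
          · rw [klDiv, if_pos ⟨h, hint⟩]
          · rw [ofReal_integral_eq_lintegral_ofReal hnegpp
              (Filter.Eventually.of_forall fun x => le_max_right _ _)]
            simp_rw [ofReal_max_zero]
            exact lintegral_ofReal_neg_llr_le h
  · rw [klDiv, if_neg fun c => hint c.2]
    exact le_top

/-- L5: chain rule for llr (a.e.). -/
lemma llr_add_llr {ν r : Measure α} [IsProbabilityMeasure p] [IsProbabilityMeasure ν]
    [IsProbabilityMeasure r] (hpν : p ≪ ν) (hνr : ν ≪ r) :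
    llr p r =ᵐ[p] fun x => llr p ν x + llr ν r x := by
  have hpr : p ≪ r := hpν.trans hνr
  filter_upwards [hpr.ae_le (Measure.rnDeriv_mul_rnDeriv hpν),
    Measure.rnDeriv_pos hpν, hpν.ae_le (Measure.rnDeriv_lt_top p ν),
    hpν.ae_le (Measure.rnDeriv_pos hνr), hpr.ae_le (Measure.rnDeriv_lt_top ν r)]
    with x hx h1 h2 h3 h4
  rw [llr, llr, llr, ← hx, Pi.mul_apply, ENNReal.toReal_mul, Real.log_mul]
  · simp [ENNReal.toReal_eq_zero_iff, h1.ne', h2.ne]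
  · simp [ENNReal.toReal_eq_zero_iff, h3.ne', h4.ne]

section Kernel

variable {X S : Type*} [MeasurableSpace X] [MeasurableSpace S]

/-- Measurability of `x ↦ klDiv (κ x) q` for a fixed finite measure `q`. -/
lemma measurable_klDiv_left [MeasurableSpace.CountablyGenerated S]
    (κ : Kernel X S) [IsFiniteKernel κ] (q : Measure S) [IsFiniteMeasure q] :
    Measurable fun x => klDiv (κ x) q := by
  classical
  have hφ : Measurable (Function.uncurry (Kernel.rnDeriv κ (Kernel.const X q))) :=
    Kernel.measurable_rnDeriv κ (Kernel.const X q)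
  set ψ : X → S → ℝ := fun x s => Real.log ((Kernel.rnDeriv κ (Kernel.const X q)) x s).toReal
    with hψdef
  have hψ : StronglyMeasurable (Function.uncurry ψ) :=
    (hφ.ennreal_toReal.log).stronglyMeasurable
  have key : ∀ x, κ x ≪ q → llr (κ x) q =ᵐ[κ x] ψ x := by
    intro x hx
    have h1 : Kernel.rnDeriv κ (Kernel.const X q) x =ᵐ[q] (κ x).rnDeriv q := by
      have h2 := Kernel.rnDeriv_eq_rnDeriv_measure (κ := κ) (η := Kernel.const X q) (a := x)
      simpa using h2
    filter_upwards [hx.ae_le h1] with s hs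
    show Real.log ((κ x).rnDeriv q s).toReal = Real.log ((Kernel.rnDeriv κ (Kernel.const X q)) x s).toReal
    rw [hs]
  have hA1 : MeasurableSet {x | κ x ≪ q} := by
    have h3 := Kernel.measurableSet_absolutelyContinuous κ (Kernel.const X q)
    simpa using h3
  have hLm : Measurable fun x => ∫⁻ s, ENNReal.ofReal ‖ψ x s‖ ∂κ x :=
    Measurable.lintegral_kernel_prod_right (hψ.measurable.norm.ennreal_ofReal)
  have hA2 : MeasurableSet {x | ∫⁻ s, ENNReal.ofReal ‖ψ x s‖ ∂κ x < ⊤} :=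
    measurableSet_lt hLm measurable_const
  have hV : Measurable fun x => ENNReal.ofReal (∫ s, ψ x s ∂κ x) :=
    (hψ.integral_kernel_prod_right).measurable.ennreal_ofReal
  have heq : (fun x => klDiv (κ x) q)
      = fun x => if κ x ≪ q ∧ ∫⁻ s, ENNReal.ofReal ‖ψ x s‖ ∂κ x < ⊤
          then ENNReal.ofReal (∫ s, ψ x s ∂κ x) else ⊤ := by
    funext x
    by_cases hac : κ x ≪ q
    · have he := key x hac
      have hiff : Integrable (llr (κ x) q) (κ x) ↔
          ∫⁻ s, ENNReal.ofReal ‖ψ x s‖ ∂κ x < ⊤ := by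
        rw [integrable_congr he]
        constructor
        · intro hi
          have h4 := hi.2
          rwa [hasFiniteIntegral_iff_norm] at h4
        · intro hfin
          refine ⟨(hψ.comp_measurable measurable_prodMk_left).aestronglyMeasurable, ?_⟩
          rwa [hasFiniteIntegral_iff_norm]
      rw [klDiv]
      by_cases hi : Integrable (llr (κ x) q) (κ x)
      · rw [if_pos ⟨hac, hi⟩, if_pos ⟨hac, hiff.mp hi⟩, integral_congr_ae he]
      · rw [if_neg (fun c => hi c.2), if_neg (fun c => hi (hiff.mpr c.2))]
    · rw [klDiv, if_neg (fun c => hac c.1), if_neg (fun c => hac c.1)]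
  rw [heq]
  exact Measurable.ite (by simpa [Set.setOf_and] using hA1.inter hA2) hV measurable_const

/-- A.e. transfer of absolute continuity: if `κ x ≪ r` then `κ x ≪ μ.bind κ` a.e. -/
lemma ae_absolutelyContinuous_trans {μ : Measure X} (κ : Kernel X S) {r ν : Measure S}
    [IsFiniteMeasure r] [IsFiniteMeasure ν] (hbind : ν = μ.bind ⇑κ) :
    ∀ᵐ x ∂μ, (κ x ≪ r → κ x ≪ ν) := by
  obtain ⟨u, hu, hru, hνu⟩ := Measure.mutuallySingular_singularPart r ν
  have hN : ∀ᵐ x ∂μ, κ x uᶜ = 0 := by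
    have h0 : ∫⁻ x, κ x uᶜ ∂μ = 0 := by
      rw [← Measure.bind_apply hu.compl κ.measurable.aemeasurable, ← hbind, hνu]
    rw [lintegral_eq_zero_iff (κ.measurable_coe hu.compl)] at h0
    exact h0
  filter_upwards [hN] with x hx hxr
  refine Measure.AbsolutelyContinuous.mk fun E hE hνE => ?_
  have h1 : r (E ∩ u) = 0 := by
    conv_lhs => rw [← Measure.rnDeriv_add_singularPart r ν]
    rw [Measure.add_apply]
    have hEu : ν (E ∩ u) = 0 := measure_mono_null Set.inter_subset_left hνE
    have hw : ν.withDensity (r.rnDeriv ν) (E ∩ u) = 0 := by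
      rw [withDensity_apply _ (hE.inter hu)]
      exact setLIntegral_measure_zero _ _ hEu
    have hs : r.singularPart ν (E ∩ u) = 0 :=
      measure_mono_null Set.inter_subset_right hru
    rw [hw, hs, add_zero]
  have h2 : κ x (E ∩ u) = 0 := hxr h1
  have h3 : κ x (E ∩ uᶜ) = 0 := measure_mono_null Set.inter_subset_right hx
  have h4 := measure_le_inter_add_diff (κ x) E u
  rw [Set.diff_eq] at h4
  exact le_antisymm (h4.trans (by rw [h2, h3]; simp)) zero_le

end Kernel

end KLaux
/-- Compensation identity: the expected KL divergence of an encoder kernel to any fixed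
prior `r` equals the mutual-information term plus `KL(ν ‖ r)` where `ν = μ.bind κ` is the
mixture marginal. -/
theorem lintegral_klDiv_eq_lintegral_klDiv_bind_add_klDiv
    {X S : Type*} [MeasurableSpace X] [MeasurableSpace S] [StandardBorelSpace S]
    (μ : Measure X) [IsProbabilityMeasure μ]
    (κ : Kernel X S) [IsMarkovKernel κ]
    (r : Measure S) [IsProbabilityMeasure r] :
    ∫⁻ x, klDiv (κ x) r ∂μ
      = ∫⁻ x, klDiv (κ x) (μ.bind ⇑κ) ∂μ + klDiv (μ.bind ⇑κ) r := by
  classical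
  set ν : Measure S := μ.bind ⇑κ with hνdef
  haveI hνprob : IsProbabilityMeasure ν := ⟨by
    rw [hνdef, Measure.bind_apply MeasurableSet.univ κ.measurable.aemeasurable]
    simp⟩
  by_cases hνr : ν ≪ r
  case neg =>
    rw [klDiv, if_neg (fun c => hνr c.1)]
    have hex : ∃ s, r s = 0 ∧ ν s ≠ 0 := by
      by_contra hcon
      push_neg at hcon
      exact hνr (Measure.AbsolutelyContinuous.mk fun s _ hs => hcon s hs)
    obtain ⟨s0, hrs0, hνs0⟩ := hex
    obtain ⟨t, hst, ht, hrt⟩ := exists_measurable_superset_of_null hrs0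
    have hνt : ν t ≠ 0 := fun h0 => hνs0 (measure_mono_null hst h0)
    have hbt : ∫⁻ x, κ x t ∂μ ≠ 0 := by
      rwa [← Measure.bind_apply ht κ.measurable.aemeasurable, ← hνdef]
    have hTm : MeasurableSet {x | κ x t ≠ 0} := by
      have h5 := (κ.measurable_coe ht) (measurableSet_singleton 0)
      simpa [Set.preimage, Set.compl_setOf] using h5.compl
    have hμT : μ {x | κ x t ≠ 0} ≠ 0 := by
      intro h0
      apply hbt
      rw [lintegral_eq_zero_iff (κ.measurable_coe ht)]
      exact (show ∀ᵐ x ∂μ, κ x t = 0 by simpa [ae_iff] using h0)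
    have htop : ∫⁻ x, klDiv (κ x) r ∂μ = ⊤ := by
      rw [eq_top_iff]
      calc (⊤ : ℝ≥0∞) = ∫⁻ _ in {x | κ x t ≠ 0}, ⊤ ∂μ := by
            rw [setLIntegral_const, ENNReal.top_mul hμT]
        _ = ∫⁻ x in {x | κ x t ≠ 0}, klDiv (κ x) r ∂μ := by
            refine setLIntegral_congr_fun hTm (fun x hx => ?_)
            rw [klDiv, if_neg]
            rintro ⟨hac, -⟩
            exact hx (hac hrt)
        _ ≤ ∫⁻ x, klDiv (κ x) r ∂μ := setLIntegral_le_lintegral _ _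
    rw [htop, add_top]
  case pos =>
    have hMr : Measurable fun x => klDiv (κ x) r := KLaux.measurable_klDiv_left κ r
    have hMν : Measurable fun x => klDiv (κ x) ν := KLaux.measurable_klDiv_left κ ν
    have hACtrans : ∀ᵐ x ∂μ, (κ x ≪ r → κ x ≪ ν) :=
      KLaux.ae_absolutelyContinuous_trans κ hνdef
    by_cases hP : ∀ᵐ x ∂μ, κ x ≪ ν
    case neg =>
      have hPset : MeasurableSet {x | κ x ≪ ν} := by
        have h6 := Kernel.measurableSet_absolutelyContinuous κ (Kernel.const X ν)
        simpa using h6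
      have hμT : μ {x | ¬ κ x ≪ ν} ≠ 0 := fun h0 => hP (ae_iff.mpr h0)
      have hTm : MeasurableSet {x | ¬ κ x ≪ ν} := hPset.compl
      have h1 : ∫⁻ x, klDiv (κ x) ν ∂μ = ⊤ := by
        rw [eq_top_iff]
        calc (⊤ : ℝ≥0∞) = ∫⁻ _ in {x | ¬ κ x ≪ ν}, ⊤ ∂μ := by
              rw [setLIntegral_const, ENNReal.top_mul hμT]
          _ = ∫⁻ x in {x | ¬ κ x ≪ ν}, klDiv (κ x) ν ∂μ := by
              refine setLIntegral_congr_fun hTm (fun x hx => ?_)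
              rw [klDiv, if_neg]
              rintro ⟨hac, -⟩
              exact hx hac
          _ ≤ ∫⁻ x, klDiv (κ x) ν ∂μ := setLIntegral_le_lintegral _ _
      have h2 : ∫⁻ x, klDiv (κ x) r ∂μ = ⊤ := by
        rw [eq_top_iff]
        calc (⊤ : ℝ≥0∞) = ∫⁻ _ in {x | ¬ κ x ≪ ν}, ⊤ ∂μ := by
              rw [setLIntegral_const, ENNReal.top_mul hμT]
          _ = ∫⁻ x in {x | ¬ κ x ≪ ν}, klDiv (κ x) r ∂μ := by
              refine setLIntegral_congr_fun_ae hTm ?_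
              filter_upwards [hACtrans] with x himp hx
              rw [klDiv, if_neg]
              rintro ⟨hac, -⟩
              exact hx (himp hac)
          _ ≤ ∫⁻ x, klDiv (κ x) r ∂μ := setLIntegral_le_lintegral _ _
      rw [h1, h2, top_add]
    case pos =>
      have hhm : Measurable (llr ν r) := measurable_llr _ _
      have hchain : ∀ᵐ x ∂μ, llr (κ x) r =ᵐ[κ x] fun s => llr (κ x) ν s + llr ν r s :=
        hP.mono fun x hx => KLaux.llr_add_llr hx hνr
      -- pointwise bounds
      have hb1 : ∀ᵐ x ∂μ, ∫⁻ s, ENNReal.ofReal (llr ν r s) ∂κ x ≤ klDiv (κ x) r + 2 := by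
        filter_upwards [hP, hchain] with x hx hcx
        have hxr : κ x ≪ r := hx.trans hνr
        calc ∫⁻ s, ENNReal.ofReal (llr ν r s) ∂κ x
            = ∫⁻ s, ENNReal.ofReal (llr (κ x) r s + - llr (κ x) ν s) ∂κ x := by
              refine lintegral_congr_ae (hcx.mono fun s hs => ?_)
              show ENNReal.ofReal (llr ν r s)
                = ENNReal.ofReal (llr (κ x) r s + - llr (κ x) ν s)
              simp only at hs
              congr 1
              linarith
          _ ≤ ∫⁻ s, (ENNReal.ofReal (llr (κ x) r s) + ENNReal.ofReal (- llr (κ x) ν s)) ∂κ x :=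
              lintegral_mono fun s => ENNReal.ofReal_add_le
          _ = ∫⁻ s, ENNReal.ofReal (llr (κ x) r s) ∂κ x
                + ∫⁻ s, ENNReal.ofReal (- llr (κ x) ν s) ∂κ x :=
              lintegral_add_left ((measurable_llr _ _).ennreal_ofReal) _
          _ ≤ (klDiv (κ x) r + 1) + 1 :=
              add_le_add (KLaux.lintegral_ofReal_le_klDiv_add_one hxr)
                (KLaux.lintegral_ofReal_neg_llr_le hx)
          _ = klDiv (κ x) r + 2 := by rw [add_assoc, one_add_one_eq_two]
      have hb2 : ∀ᵐ x ∂μ, klDiv (κ x) ν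
          ≤ klDiv (κ x) r + 1 + ∫⁻ s, ENNReal.ofReal (- llr ν r s) ∂κ x := by
        filter_upwards [hP, hchain] with x hx hcx
        have hxr : κ x ≪ r := hx.trans hνr
        calc klDiv (κ x) ν ≤ ∫⁻ s, ENNReal.ofReal (llr (κ x) ν s) ∂κ x :=
              KLaux.klDiv_le_lintegral_ofReal hx
          _ = ∫⁻ s, ENNReal.ofReal (llr (κ x) r s + - llr ν r s) ∂κ x := by
              refine lintegral_congr_ae (hcx.mono fun s hs => ?_)
              show ENNReal.ofReal (llr (κ x) ν s)
                = ENNReal.ofReal (llr (κ x) r s + - llr ν r s)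
              simp only at hs
              congr 1
              linarith
          _ ≤ ∫⁻ s, (ENNReal.ofReal (llr (κ x) r s) + ENNReal.ofReal (- llr ν r s)) ∂κ x :=
              lintegral_mono fun s => ENNReal.ofReal_add_le
          _ = ∫⁻ s, ENNReal.ofReal (llr (κ x) r s) ∂κ x
                + ∫⁻ s, ENNReal.ofReal (- llr ν r s) ∂κ x :=
              lintegral_add_left ((measurable_llr _ _).ennreal_ofReal) _
          _ ≤ (klDiv (κ x) r + 1) + ∫⁻ s, ENNReal.ofReal (- llr ν r s) ∂κ x :=
              add_le_add_left (KLaux.lintegral_ofReal_le_klDiv_add_one hxr) _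
      have hb3 : ∀ᵐ x ∂μ, klDiv (κ x) r
          ≤ klDiv (κ x) ν + 1 + ∫⁻ s, ENNReal.ofReal (llr ν r s) ∂κ x := by
        filter_upwards [hP, hchain] with x hx hcx
        have hxr : κ x ≪ r := hx.trans hνr
        calc klDiv (κ x) r ≤ ∫⁻ s, ENNReal.ofReal (llr (κ x) r s) ∂κ x :=
              KLaux.klDiv_le_lintegral_ofReal hxr
          _ = ∫⁻ s, ENNReal.ofReal (llr (κ x) ν s + llr ν r s) ∂κ x := by
              refine lintegral_congr_ae (hcx.mono fun s hs => ?_)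
              show ENNReal.ofReal (llr (κ x) r s)
                = ENNReal.ofReal (llr (κ x) ν s + llr ν r s)
              simp only at hs
              congr 1
          _ ≤ ∫⁻ s, (ENNReal.ofReal (llr (κ x) ν s) + ENNReal.ofReal (llr ν r s)) ∂κ x :=
              lintegral_mono fun s => ENNReal.ofReal_add_le
          _ = ∫⁻ s, ENNReal.ofReal (llr (κ x) ν s) ∂κ x
                + ∫⁻ s, ENNReal.ofReal (llr ν r s) ∂κ x :=
              lintegral_add_left ((measurable_llr _ _).ennreal_ofReal) _
          _ ≤ (klDiv (κ x) ν + 1) + ∫⁻ s, ENNReal.ofReal (llr ν r s) ∂κ x :=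
              add_le_add_left (KLaux.lintegral_ofReal_le_klDiv_add_one hx) _
      -- Fubini for the bind
      have hFubiniPos : ∫⁻ x, (∫⁻ s, ENNReal.ofReal (llr ν r s) ∂κ x) ∂μ
          = ∫⁻ s, ENNReal.ofReal (llr ν r s) ∂ν := by
        rw [hνdef, Measure.lintegral_bind κ.measurable.aemeasurable hhm.ennreal_ofReal.aemeasurable]
      have hFubiniNeg : ∫⁻ x, (∫⁻ s, ENNReal.ofReal (- llr ν r s) ∂κ x) ∂μ
          = ∫⁻ s, ENNReal.ofReal (- llr ν r s) ∂ν := by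
        rw [hνdef, Measure.lintegral_bind (f := fun s => ENNReal.ofReal (- llr (μ.bind ⇑κ) r s))
          κ.measurable.aemeasurable hhm.neg.ennreal_ofReal.aemeasurable]
      have hHneg_le : ∫⁻ s, ENNReal.ofReal (- llr ν r s) ∂ν ≤ 1 :=
        KLaux.lintegral_ofReal_neg_llr_le hνr
      -- measurability of inner lintegrals
      have hHm : Measurable fun x => ∫⁻ s, ENNReal.ofReal (llr ν r s) ∂κ x :=
        Measurable.lintegral_kernel_prod_right
          ((hhm.ennreal_ofReal).comp measurable_snd)
      have hHmneg : Measurable fun x => ∫⁻ s, ENNReal.ofReal (- llr ν r s) ∂κ x :=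
        Measurable.lintegral_kernel_prod_right
          ((hhm.neg.ennreal_ofReal).comp measurable_snd)
      by_cases hint : Integrable (llr ν r) ν
      case neg =>
        rw [klDiv, if_neg (fun c => hint c.2)]
        have hpos_top : ∫⁻ s, ENNReal.ofReal (llr ν r s) ∂ν = ⊤ := by
          by_contra hne
          exact hint ((KLaux.integrable_llr_iff_lintegral_ne_top hνr).mpr hne)
        have hLtop : ∫⁻ x, klDiv (κ x) r ∂μ = ⊤ := by
          by_contra hne
          have hle : ∫⁻ s, ENNReal.ofReal (llr ν r s) ∂ν ≤ ∫⁻ x, klDiv (κ x) r ∂μ + 2 := by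
            rw [← hFubiniPos]
            calc ∫⁻ x, (∫⁻ s, ENNReal.ofReal (llr ν r s) ∂κ x) ∂μ
                ≤ ∫⁻ x, (klDiv (κ x) r + 2) ∂μ := lintegral_mono_ae hb1
              _ = ∫⁻ x, klDiv (κ x) r ∂μ + 2 := by
                  rw [lintegral_add_right _ measurable_const, lintegral_const]
                  simp
          rw [hpos_top, top_le_iff] at hle
          exact ENNReal.add_ne_top.mpr ⟨hne, by simp⟩ hle
        rw [hLtop, add_top]
      case pos =>
        have hpos_ne : ∫⁻ s, ENNReal.ofReal (llr ν r s) ∂ν ≠ ⊤ :=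
          (KLaux.integrable_llr_iff_lintegral_ne_top hνr).mp hint
        by_cases hG : ∫⁻ x, klDiv (κ x) ν ∂μ = ⊤
        case pos =>
          rw [hG, top_add]
          by_contra hne
          have hchain2 : ∫⁻ x, klDiv (κ x) ν ∂μ
              ≤ ∫⁻ x, klDiv (κ x) r ∂μ + 1 + ∫⁻ s, ENNReal.ofReal (- llr ν r s) ∂ν := by
            rw [← hFubiniNeg]
            calc ∫⁻ x, klDiv (κ x) ν ∂μ
                ≤ ∫⁻ x, (klDiv (κ x) r + 1
                    + ∫⁻ s, ENNReal.ofReal (- llr ν r s) ∂κ x) ∂μ := lintegral_mono_ae hb2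
              _ = ∫⁻ x, (klDiv (κ x) r + 1) ∂μ
                    + ∫⁻ x, (∫⁻ s, ENNReal.ofReal (- llr ν r s) ∂κ x) ∂μ :=
                  lintegral_add_left (hMr.add measurable_const) _
              _ = ∫⁻ x, klDiv (κ x) r ∂μ + 1
                    + ∫⁻ x, (∫⁻ s, ENNReal.ofReal (- llr ν r s) ∂κ x) ∂μ := by
                  rw [lintegral_add_right _ measurable_const, lintegral_const]
                  simp
          rw [hG, top_le_iff] at hchain2
          refine ENNReal.add_ne_top.mpr ⟨ENNReal.add_ne_top.mpr ⟨hne, by simp⟩, ?_⟩ hchain2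
          exact ne_top_of_le_ne_top (by simp) hHneg_le
        case neg =>
          -- final branch: everything finite
          have hGae : ∀ᵐ x ∂μ, klDiv (κ x) ν ≠ ⊤ :=
            (ae_lt_top hMν hG).mono fun x hx => hx.ne
          have hHfin : ∫⁻ x, (∫⁻ s, ENNReal.ofReal (llr ν r s) ∂κ x) ∂μ ≠ ⊤ := by
            rw [hFubiniPos]; exact hpos_ne
          have hHnegfin : ∫⁻ x, (∫⁻ s, ENNReal.ofReal (- llr ν r s) ∂κ x) ∂μ ≠ ⊤ := by
            rw [hFubiniNeg]; exact ne_top_of_le_ne_top (by simp) hHneg_le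
          have hHae : ∀ᵐ x ∂μ, (∫⁻ s, ENNReal.ofReal (llr ν r s) ∂κ x) ≠ ⊤ :=
            (ae_lt_top hHm hHfin).mono fun x hx => hx.ne
          have hLae : ∀ᵐ x ∂μ, klDiv (κ x) r ≠ ⊤ := by
            filter_upwards [hb3, hGae, hHae] with x h3 hg hh
            intro htop
            rw [htop, top_le_iff] at h3
            exact ENNReal.add_ne_top.mpr ⟨ENNReal.add_ne_top.mpr ⟨hg, ENNReal.one_ne_top⟩, hh⟩ h3
          have hklr : ∀ᵐ x ∂μ, κ x ≪ r ∧ Integrable (llr (κ x) r) (κ x) ∧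
              klDiv (κ x) r = ENNReal.ofReal (∫ s, llr (κ x) r s ∂κ x) := by
            filter_upwards [hLae] with x hx
            rw [klDiv] at hx
            by_cases hc : κ x ≪ r ∧ Integrable (llr (κ x) r) (κ x)
            · exact ⟨hc.1, hc.2, by rw [klDiv, if_pos hc]⟩
            · rw [if_neg hc] at hx; exact absurd rfl hx
          have hklν : ∀ᵐ x ∂μ, κ x ≪ ν ∧ Integrable (llr (κ x) ν) (κ x) ∧
              klDiv (κ x) ν = ENNReal.ofReal (∫ s, llr (κ x) ν s ∂κ x) := by
            filter_upwards [hGae] with x hx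
            rw [klDiv] at hx
            by_cases hc : κ x ≪ ν ∧ Integrable (llr (κ x) ν) (κ x)
            · exact ⟨hc.1, hc.2, by rw [klDiv, if_pos hc]⟩
            · rw [if_neg hc] at hx; exact absurd rfl hx
          have hinth : ∀ᵐ x ∂μ, Integrable (llr ν r) (κ x) := by
            filter_upwards [hklr, hklν, hchain] with x h1 h2 hc
            refine (h1.2.1.sub h2.2.1).congr ?_
            refine hc.mono fun s hs => ?_
            simp only at hs
            simp only [Pi.sub_apply]
            linarith
          have hsum : ∀ᵐ x ∂μ, ∫ s, llr (κ x) r s ∂κ x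
              = ∫ s, llr (κ x) ν s ∂κ x + ∫ s, llr ν r s ∂κ x := by
            filter_upwards [hklν, hinth, hchain] with x h2 hh hc
            rw [integral_congr_ae hc, integral_add h2.2.1 hh]
          have hGpos : ∀ᵐ x ∂μ, 0 ≤ ∫ s, llr (κ x) ν s ∂κ x :=
            hklν.mono fun x h2 => KLaux.integral_llr_nonneg h2.1 h2.2.1
          have hFpos : ∀ᵐ x ∂μ, 0 ≤ ∫ s, llr (κ x) ν s ∂κ x + ∫ s, llr ν r s ∂κ x := by
            filter_upwards [hklr, hsum] with x h1 hs
            rw [← hs]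
            exact KLaux.integral_llr_nonneg h1.1 h1.2.1
          have hklr' : ∀ᵐ x ∂μ, klDiv (κ x) r
              = ENNReal.ofReal (∫ s, llr (κ x) ν s ∂κ x + ∫ s, llr ν r s ∂κ x) := by
            filter_upwards [hklr, hsum] with x h1 hs
            rw [h1.2.2, hs]
          have hklν' : ∀ᵐ x ∂μ, klDiv (κ x) ν
              = ENNReal.ofReal (∫ s, llr (κ x) ν s ∂κ x) :=
            hklν.mono fun x h2 => h2.2.2
          -- integrability of G
          have hGeq : (fun x => (klDiv (κ x) ν).toReal)
              =ᵐ[μ] fun x => ∫ s, llr (κ x) ν s ∂κ x := by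
            filter_upwards [hklν', hGpos] with x hk hp
            rw [hk, ENNReal.toReal_ofReal hp]
          have hGint : Integrable (fun x => ∫ s, llr (κ x) ν s ∂κ x) μ := by
            refine ⟨(hMν.ennreal_toReal).aestronglyMeasurable.congr hGeq, ?_⟩
            rw [hasFiniteIntegral_iff_norm]
            have heq : ∫⁻ x, ENNReal.ofReal ‖∫ s, llr (κ x) ν s ∂κ x‖ ∂μ
                = ∫⁻ x, klDiv (κ x) ν ∂μ := by
              refine lintegral_congr_ae ?_
              filter_upwards [hklν', hGpos] with x hk hp
              rw [Real.norm_eq_abs, abs_of_nonneg hp, hk]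
            rw [heq]
            exact lt_top_iff_ne_top.mpr hG
          -- integrability of H
          have hHp_int : Integrable
              (fun x => (∫⁻ s, ENNReal.ofReal (llr ν r s) ∂κ x).toReal) μ :=
            integrable_toReal_of_lintegral_ne_top hHm.aemeasurable hHfin
          have hHm_int : Integrable
              (fun x => (∫⁻ s, ENNReal.ofReal (- llr ν r s) ∂κ x).toReal) μ :=
            integrable_toReal_of_lintegral_ne_top hHmneg.aemeasurable hHnegfin
          have hHdiff : ∀ᵐ x ∂μ, ∫ s, llr ν r s ∂κ x
              = (∫⁻ s, ENNReal.ofReal (llr ν r s) ∂κ x).toReal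
                - (∫⁻ s, ENNReal.ofReal (- llr ν r s) ∂κ x).toReal :=
            hinth.mono fun x hx =>
              integral_eq_lintegral_pos_part_sub_lintegral_neg_part hx
          have hHint : Integrable (fun x => ∫ s, llr ν r s ∂κ x) μ :=
            (hHp_int.sub hHm_int).congr (hHdiff.mono fun x hx => hx.symm)
          have hHval : ∫ x, (∫ s, llr ν r s ∂κ x) ∂μ = ∫ s, llr ν r s ∂ν := by
            rw [integral_congr_ae hHdiff, integral_sub hHp_int hHm_int,
              integral_toReal hHm.aemeasurable (ae_lt_top hHm hHfin),
              integral_toReal hHmneg.aemeasurable (ae_lt_top hHmneg hHnegfin),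
              hFubiniPos, hFubiniNeg,
              ← integral_eq_lintegral_pos_part_sub_lintegral_neg_part hint]
          have hInn : 0 ≤ ∫ s, llr ν r s ∂ν := KLaux.integral_llr_nonneg hνr hint
          calc ∫⁻ x, klDiv (κ x) r ∂μ
              = ∫⁻ x, ENNReal.ofReal
                  (∫ s, llr (κ x) ν s ∂κ x + ∫ s, llr ν r s ∂κ x) ∂μ :=
                lintegral_congr_ae hklr'
            _ = ENNReal.ofReal (∫ x, (∫ s, llr (κ x) ν s ∂κ x + ∫ s, llr ν r s ∂κ x) ∂μ) :=
                (ofReal_integral_eq_lintegral_ofReal (hGint.add hHint) hFpos).symm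
            _ = ENNReal.ofReal (∫ x, (∫ s, llr (κ x) ν s ∂κ x) ∂μ
                  + ∫ x, (∫ s, llr ν r s ∂κ x) ∂μ) := by
                rw [integral_add hGint hHint]
            _ = ENNReal.ofReal (∫ x, (∫ s, llr (κ x) ν s ∂κ x) ∂μ)
                  + ENNReal.ofReal (∫ x, (∫ s, llr ν r s ∂κ x) ∂μ) :=
                ENNReal.ofReal_add (integral_nonneg_of_ae hGpos)
                  (by rw [hHval]; exact hInn)
            _ = ∫⁻ x, klDiv (κ x) ν ∂μ + klDiv ν r := by
                congr 1
                · rw [ofReal_integral_eq_lintegral_ofReal hGint hGpos]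
                  exact (lintegral_congr_ae hklν').symm
                · rw [hHval, klDiv, if_pos ⟨hνr, hint⟩]
end

section
/- Let X be a measurable space and S a standard Borel space, let μ be a probability measure on X, let κ be a Markov kernel from X to S, and let ν = μ.bind κ be the mixture marginal of κ under μ. Then for every probability measure r on S, ∫ KL(κ(x) ‖ ν) dμ(x) ≤ ∫ KL(κ(x) ‖ r) dμ(x), i.e., the mutual information between input and latent representation is upper bounded by the expected KL divergence of the encoder to any fixed variational prior r. -/
open MeasureTheory ProbabilityTheory
open scoped ENNReal NNReal

section Helpers
variable {α : Type*} [MeasurableSpace α] {μ ν : Measure α}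

lemma my_llr_le_toReal (ν μ : Measure α) (x : α) :
    llr ν μ x ≤ (ν.rnDeriv μ x).toReal := by
  rcases eq_or_lt_of_le (ENNReal.toReal_nonneg : (0:ℝ) ≤ (ν.rnDeriv μ x).toReal) with h | h
  · simp [llr, ← h]
  · exact (Real.log_le_sub_one_of_pos h).trans (by linarith)

lemma my_integral_llr_nonneg [IsProbabilityMeasure μ] [IsProbabilityMeasure ν]
    (hμν : μ ≪ ν) (h : Integrable (llr μ ν) μ) : 0 ≤ ∫ x, llr μ ν x ∂μ := by
  have hneg : (fun x => - llr μ ν x) =ᵐ[μ] llr ν μ := neg_llr hμν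
  have hint : Integrable (llr ν μ) μ := h.neg.congr hneg
  have hb : ∀ᵐ x ∂μ, llr ν μ x ≤ (ν.rnDeriv μ x).toReal - 1 := by
    filter_upwards [Measure.rnDeriv_pos' hμν, Measure.rnDeriv_lt_top ν μ] with x h1 h2
    exact Real.log_le_sub_one_of_pos (ENNReal.toReal_pos h1.ne' h2.ne)
  have h2 : ∫ x, llr ν μ x ∂μ ≤ ∫ x, ((ν.rnDeriv μ x).toReal - 1) ∂μ := by
    refine integral_mono_ae hint ((Measure.integrable_toReal_rnDeriv).sub (integrable_const 1)) hb
  have h3 : ∫ x, ((ν.rnDeriv μ x).toReal - 1) ∂μ ≤ 0 := by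
    rw [integral_sub Measure.integrable_toReal_rnDeriv (integrable_const 1), integral_const]
    have h4 : ∫ x, (ν.rnDeriv μ x).toReal ∂μ ≤ (ν Set.univ).toReal := by
      have := Measure.setIntegral_toReal_rnDeriv_le (μ := ν) (ν := μ) (s := Set.univ)
        (measure_ne_top ν _)
      rwa [setIntegral_univ] at this
    simp only [Measure.real, measure_univ, ENNReal.toReal_one, smul_eq_mul, mul_one] at h4 ⊢
    linarith
  have h5 : ∫ x, llr ν μ x ∂μ = - ∫ x, llr μ ν x ∂μ := by
    rw [← integral_congr_ae hneg, integral_neg]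
  have := h2.trans h3
  rw [h5] at this
  linarith

lemma my_lintegral_neg_part_llr_le [IsProbabilityMeasure μ] [IsProbabilityMeasure ν]
    (hμν : μ ≪ ν) :
    ∫⁻ x, ENNReal.ofReal (max (- llr μ ν x) 0) ∂μ ≤ 1 := by
  have hb : ∀ᵐ x ∂μ, ENNReal.ofReal (max (- llr μ ν x) 0) ≤ ν.rnDeriv μ x := by
    filter_upwards [neg_llr hμν] with x hx
    simp only [Pi.neg_apply] at hx
    have h1 : max (- llr μ ν x) 0 ≤ (ν.rnDeriv μ x).toReal :=
      max_le (hx.trans_le (my_llr_le_toReal ν μ x)) ENNReal.toReal_nonneg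
    exact (ENNReal.ofReal_le_ofReal h1).trans ENNReal.ofReal_toReal_le
  calc ∫⁻ x, ENNReal.ofReal (max (- llr μ ν x) 0) ∂μ ≤ ∫⁻ x, ν.rnDeriv μ x ∂μ :=
        lintegral_mono_ae hb
    _ ≤ ν Set.univ := Measure.lintegral_rnDeriv_le
    _ = 1 := measure_univ

lemma my_integral_neg_part_llr_le [IsProbabilityMeasure μ] [IsProbabilityMeasure ν]
    (hμν : μ ≪ ν) :
    ∫ x, max (- llr μ ν x) 0 ∂μ ≤ 1 := by
  rw [integral_eq_lintegral_of_nonneg_ae (f := fun x => max (- llr μ ν x) 0)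
    (ae_of_all _ fun x => le_max_right _ _)
    (((measurable_llr μ ν).neg.max measurable_const).aestronglyMeasurable)]
  have := my_lintegral_neg_part_llr_le hμν
  calc (∫⁻ x, ENNReal.ofReal (max (- llr μ ν x) 0) ∂μ).toReal ≤ (1 : ℝ≥0∞).toReal :=
        ENNReal.toReal_mono ENNReal.one_ne_top this
    _ = 1 := by simp

lemma my_lintegral_pos_part_llr_le [IsProbabilityMeasure μ] [IsProbabilityMeasure ν]
    (hμν : μ ≪ ν) (h : Integrable (llr μ ν) μ) :
    ∫⁻ x, ENNReal.ofReal (max (llr μ ν x) 0) ∂μ ≤ ENNReal.ofReal (∫ x, llr μ ν x ∂μ) + 1 := by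
  have hmax : Integrable (fun x => max (llr μ ν x) 0) μ := h.pos_part
  rw [← ofReal_integral_eq_lintegral_ofReal hmax (ae_of_all _ fun x => le_max_right _ _)]
  have hnegint : Integrable (fun x => max (- llr μ ν x) 0) μ := by
    simpa using h.neg.pos_part
  have heq : ∫ x, max (llr μ ν x) 0 ∂μ
      = ∫ x, llr μ ν x ∂μ + ∫ x, max (- llr μ ν x) 0 ∂μ := by
    rw [← integral_add h hnegint]
    congr 1; funext x
    rcases le_total (llr μ ν x) 0 with hx | hx
    · simp [max_eq_right hx, max_eq_left (neg_nonneg.2 hx)]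
    · simp [max_eq_left hx, max_eq_right (neg_nonpos.2 hx)]
  rw [heq]
  calc ENNReal.ofReal (∫ x, llr μ ν x ∂μ + ∫ x, max (- llr μ ν x) 0 ∂μ)
      ≤ ENNReal.ofReal (∫ x, llr μ ν x ∂μ) + ENNReal.ofReal (∫ x, max (- llr μ ν x) 0 ∂μ) :=
        ENNReal.ofReal_add_le
    _ ≤ ENNReal.ofReal (∫ x, llr μ ν x ∂μ) + 1 := by
        gcongr
        exact ENNReal.ofReal_le_one.2 (my_integral_neg_part_llr_le hμν)

end Helpers

section Bind
variable {X S : Type*} [MeasurableSpace X] [MeasurableSpace S]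

lemma my_lintegral_bind (μ : Measure X) (κ : Kernel X S) {f : S → ℝ≥0∞} (hf : Measurable f) :
    ∫⁻ x, ∫⁻ y, f y ∂κ x ∂μ = ∫⁻ y, f y ∂(μ.bind ⇑κ) :=
  (Measure.lintegral_bind κ.measurable.aemeasurable hf.aemeasurable).symm

lemma my_integral_bind_nonneg (μ : Measure X) (κ : Kernel X S) [IsSFiniteKernel κ]
    {f : S → ℝ} (hf : Measurable f) (h0 : ∀ y, 0 ≤ f y)
    (hfin : ∫⁻ y, ENNReal.ofReal (f y) ∂(μ.bind ⇑κ) ≠ ⊤) :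
    ∫ x, (∫ y, f y ∂κ x) ∂μ = ∫ y, f y ∂(μ.bind ⇑κ) := by
  have hL : Measurable fun x => ∫⁻ y, ENNReal.ofReal (f y) ∂κ x :=
    Measurable.lintegral_kernel hf.ennreal_ofReal
  have hLbind : ∫⁻ x, (∫⁻ y, ENNReal.ofReal (f y) ∂κ x) ∂μ
      = ∫⁻ y, ENNReal.ofReal (f y) ∂(μ.bind ⇑κ) :=
    my_lintegral_bind μ κ hf.ennreal_ofReal
  have hinner : ∀ x, ∫ y, f y ∂κ x = (∫⁻ y, ENNReal.ofReal (f y) ∂κ x).toReal := fun x =>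
    integral_eq_lintegral_of_nonneg_ae (ae_of_all _ h0) hf.aestronglyMeasurable
  calc ∫ x, (∫ y, f y ∂κ x) ∂μ
      = ∫ x, (∫⁻ y, ENNReal.ofReal (f y) ∂κ x).toReal ∂μ := by simp_rw [hinner]
    _ = (∫⁻ x, (∫⁻ y, ENNReal.ofReal (f y) ∂κ x) ∂μ).toReal := by
        refine integral_toReal hL.aemeasurable ?_
        refine ae_lt_top hL ?_
        rw [hLbind]; exact hfin
    _ = (∫⁻ y, ENNReal.ofReal (f y) ∂(μ.bind ⇑κ)).toReal := by rw [hLbind]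
    _ = ∫ y, f y ∂(μ.bind ⇑κ) :=
        (integral_eq_lintegral_of_nonneg_ae (ae_of_all _ h0) hf.aestronglyMeasurable).symm

lemma my_integral_bind (μ : Measure X) [IsFiniteMeasure μ] (κ : Kernel X S) [IsMarkovKernel κ]
    {f : S → ℝ} (hf : Measurable f) (hint : Integrable f (μ.bind ⇑κ)) :
    ∫ x, (∫ y, f y ∂κ x) ∂μ = ∫ y, f y ∂(μ.bind ⇑κ) := by
  set ν := μ.bind ⇑κ with hν
  have hnn : ∫⁻ y, (‖f y‖₊ : ℝ≥0∞) ∂ν ≠ ⊤ := hint.2.ne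
  have hposfin : ∫⁻ y, ENNReal.ofReal (max (f y) 0) ∂ν ≠ ⊤ := by
    refine ne_top_of_le_ne_top hnn (lintegral_mono fun y => ?_)
    rw [← enorm_eq_nnnorm, Real.enorm_eq_ofReal_abs]
    exact ENNReal.ofReal_le_ofReal (max_le (le_abs_self _) (abs_nonneg _))
  have hnegfin : ∫⁻ y, ENNReal.ofReal (max (- f y) 0) ∂ν ≠ ⊤ := by
    refine ne_top_of_le_ne_top hnn (lintegral_mono fun y => ?_)
    rw [← enorm_eq_nnnorm, Real.enorm_eq_ofReal_abs]
    exact ENNReal.ofReal_le_ofReal (max_le (neg_le_abs _) (abs_nonneg _))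
  have hpos := my_integral_bind_nonneg μ κ (hf.max measurable_const)
    (fun y => le_max_right _ _) hposfin
  have hneg := my_integral_bind_nonneg μ κ (hf.neg.max measurable_const)
    (fun y => le_max_right _ _) hnegfin
  have hmeasnorm : Measurable fun x => ∫⁻ y, (‖f y‖₊ : ℝ≥0∞) ∂κ x :=
    Measurable.lintegral_kernel hf.nnnorm.coe_nnreal_ennreal
  have haeint : ∀ᵐ x ∂μ, Integrable f (κ x) := by
    have : ∫⁻ x, (∫⁻ y, (‖f y‖₊ : ℝ≥0∞) ∂κ x) ∂μ ≠ ⊤ := by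
      rw [my_lintegral_bind μ κ hf.nnnorm.coe_nnreal_ennreal]; exact hnn
    filter_upwards [ae_lt_top hmeasnorm this] with x hx
    exact ⟨hf.aestronglyMeasurable, hx⟩
  have hsplit : ∀ᵐ x ∂μ, ∫ y, f y ∂κ x
      = ∫ y, max (f y) 0 ∂κ x - ∫ y, max (- f y) 0 ∂κ x := by
    filter_upwards [haeint] with x hx
    rw [← integral_sub hx.pos_part (by simpa using hx.neg.pos_part)]
    congr 1; funext y
    rcases le_total (f y) 0 with h | h
    · simp [max_eq_right h, max_eq_left (neg_nonneg.2 h)]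
    · simp [max_eq_left h, max_eq_right (neg_nonpos.2 h)]
  have hintpos : Integrable (fun x => ∫ y, max (f y) 0 ∂κ x) μ := by
    constructor
    · exact (StronglyMeasurable.integral_kernel_prod_right
        (f := fun _ y => max (f y) 0)
        (((hf.comp measurable_snd).max measurable_const).stronglyMeasurable)).aestronglyMeasurable
    · rw [HasFiniteIntegral]
      calc ∫⁻ x, (‖∫ y, max (f y) 0 ∂κ x‖₊ : ℝ≥0∞) ∂μ
          ≤ ∫⁻ x, ∫⁻ y, (‖max (f y) 0‖₊ : ℝ≥0∞) ∂κ x ∂μ :=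
            lintegral_mono fun x => enorm_integral_le_lintegral_enorm _
        _ = ∫⁻ y, (‖max (f y) 0‖₊ : ℝ≥0∞) ∂ν :=
            my_lintegral_bind μ κ ((hf.max measurable_const).nnnorm.coe_nnreal_ennreal)
        _ < ⊤ := by
            refine lt_of_le_of_lt (lintegral_mono fun y => ?_) hnn.lt_top
            simp only [← enorm_eq_nnnorm, Real.enorm_eq_ofReal_abs]
            exact ENNReal.ofReal_le_ofReal (by
              rw [abs_of_nonneg (le_max_right _ _)]
              exact max_le (le_abs_self _) (abs_nonneg _))
  have hintneg : Integrable (fun x => ∫ y, max (- f y) 0 ∂κ x) μ := by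
    constructor
    · exact (StronglyMeasurable.integral_kernel_prod_right
        (f := fun _ y => max (- f y) 0)
        ((((hf.comp measurable_snd).neg).max measurable_const).stronglyMeasurable)).aestronglyMeasurable
    · rw [HasFiniteIntegral]
      calc ∫⁻ x, (‖∫ y, max (- f y) 0 ∂κ x‖₊ : ℝ≥0∞) ∂μ
          ≤ ∫⁻ x, ∫⁻ y, (‖max (- f y) 0‖₊ : ℝ≥0∞) ∂κ x ∂μ :=
            lintegral_mono fun x => enorm_integral_le_lintegral_enorm _
        _ = ∫⁻ y, (‖max (- f y) 0‖₊ : ℝ≥0∞) ∂ν :=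
            my_lintegral_bind μ κ ((hf.neg.max measurable_const).nnnorm.coe_nnreal_ennreal)
        _ < ⊤ := by
            refine lt_of_le_of_lt (lintegral_mono fun y => ?_) hnn.lt_top
            simp only [← enorm_eq_nnnorm, Real.enorm_eq_ofReal_abs]
            exact ENNReal.ofReal_le_ofReal (by
              rw [abs_of_nonneg (le_max_right _ _)]
              exact max_le (neg_le_abs _) (abs_nonneg _))
  calc ∫ x, (∫ y, f y ∂κ x) ∂μ
      = ∫ x, (∫ y, max (f y) 0 ∂κ x - ∫ y, max (- f y) 0 ∂κ x) ∂μ :=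
        integral_congr_ae hsplit
    _ = ∫ x, (∫ y, max (f y) 0 ∂κ x) ∂μ - ∫ x, (∫ y, max (- f y) 0 ∂κ x) ∂μ :=
        integral_sub hintpos hintneg
    _ = ∫ y, max (f y) 0 ∂ν - ∫ y, max (- f y) 0 ∂ν := by simp only [Pi.neg_apply] at hneg; rw [hpos, hneg]
    _ = ∫ y, f y ∂ν := by
        rw [← integral_sub hint.pos_part (by simpa using hint.neg.pos_part)]
        congr 1; funext y
        rcases le_total (f y) 0 with h | h
        · simp [max_eq_right h, max_eq_left (neg_nonneg.2 h)]
        · simp [max_eq_left h, max_eq_right (neg_nonpos.2 h)]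
end Bind

section KernelRep
variable {X S : Type*} [MeasurableSpace X] [MeasurableSpace S]
  [MeasurableSpace.CountableOrCountablyGenerated X S]
  (κ : Kernel X S) [IsFiniteKernel κ] (ρ : Measure S) [IsFiniteMeasure ρ]

/-- jointly measurable representative of `fun x y => llr (κ x) ρ y` -/
noncomputable def gllr (x : X) (y : S) : ℝ :=
  Real.log ((Kernel.rnDeriv κ (Kernel.const X ρ) x y).toReal)

lemma measurable_gllr : Measurable (Function.uncurry (gllr κ ρ)) :=
  ((Kernel.measurable_rnDeriv κ (Kernel.const X ρ)).ennreal_toReal).log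

lemma llr_ae_eq_gllr {x : X} (hx : κ x ≪ ρ) :
    llr (κ x) ρ =ᵐ[κ x] gllr κ ρ x := by
  have h := Kernel.rnDeriv_eq_rnDeriv_measure (κ := κ) (η := Kernel.const X ρ) (a := x)
  simp only [Kernel.const_apply] at h
  filter_upwards [hx.ae_le h] with y hy
  rw [llr, gllr, hy]

lemma klDiv_eq_ofReal_integral_gllr {x : X} (hx : κ x ≪ ρ)
    (hint : Integrable (llr (κ x) ρ) (κ x)) :
    klDiv (κ x) ρ = ENNReal.ofReal (∫ y, gllr κ ρ x y ∂κ x) := by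
  rw [klDiv, if_pos ⟨hx, hint⟩, integral_congr_ae (llr_ae_eq_gllr κ ρ hx)]

open scoped Classical in
lemma klDiv_kernel_eq :
    (fun x => klDiv (κ x) ρ) = fun x =>
      if (κ x ≪ ρ) ∧ (∫⁻ y, (‖gllr κ ρ x y‖₊ : ℝ≥0∞) ∂κ x) < ⊤
      then ENNReal.ofReal (∫ y, gllr κ ρ x y ∂κ x)
      else ⊤ := by
  funext x
  by_cases hac : κ x ≪ ρ
  · have hcongr := llr_ae_eq_gllr κ ρ hac
    have hiff : Integrable (llr (κ x) ρ) (κ x)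
        ↔ (∫⁻ y, (‖gllr κ ρ x y‖₊ : ℝ≥0∞) ∂κ x) < ⊤ := by
      rw [integrable_congr hcongr]
      exact ⟨fun h => h.2, fun h =>
        ⟨((measurable_gllr κ ρ).comp measurable_prodMk_left).aestronglyMeasurable, h⟩⟩
    by_cases hint : Integrable (llr (κ x) ρ) (κ x)
    · rw [klDiv_eq_ofReal_integral_gllr κ ρ hac hint, if_pos ⟨hac, hiff.1 hint⟩]
    · rw [klDiv, if_neg (fun h => hint h.2), if_neg (fun h => hint (hiff.2 h.2))]
  · rw [klDiv, if_neg (fun h => hac h.1), if_neg (fun h => hac h.1)]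

lemma measurable_klDiv_kernel : Measurable (fun x => klDiv (κ x) ρ) := by
  rw [klDiv_kernel_eq κ ρ]
  have hL : Measurable fun x => ∫⁻ y, (‖gllr κ ρ x y‖₊ : ℝ≥0∞) ∂κ x :=
    Measurable.lintegral_kernel_prod_right (measurable_gllr κ ρ).nnnorm.coe_nnreal_ennreal
  have hI : Measurable fun x => ENNReal.ofReal (∫ y, gllr κ ρ x y ∂κ x) :=
    (StronglyMeasurable.integral_kernel_prod_right
      (measurable_gllr κ ρ).stronglyMeasurable).measurable.ennreal_ofReal
  refine Measurable.ite ?_ hI measurable_const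
  have h1 : MeasurableSet {x | κ x ≪ ρ} := by
    have := Kernel.measurableSet_absolutelyContinuous κ (Kernel.const X ρ)
    simpa only [Kernel.const_apply] using this
  rw [Set.setOf_and]
  exact h1.inter (measurableSet_lt hL measurable_const)
end KernelRep


/-- The mutual information between input and latent representation, expressed as the
expected KL divergence of the encoder kernel to its mixture marginal `ν = μ.bind κ`,
is upper bounded by the expected KL divergence to any fixed variational prior `r`. -/
theorem lintegral_klDiv_bind_le_lintegral_klDiv
    {X S : Type*} [MeasurableSpace X] [MeasurableSpace S] [StandardBorelSpace S]
    (μ : Measure X) [IsProbabilityMeasure μ]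
    (κ : Kernel X S) [IsMarkovKernel κ]
    (r : Measure S) [IsProbabilityMeasure r] :
    ∫⁻ x, klDiv (κ x) (μ.bind ⇑κ) ∂μ ≤ ∫⁻ x, klDiv (κ x) r ∂μ := by
  set ν : Measure S := μ.bind ⇑κ with hν_def
  haveI hνprob : IsProbabilityMeasure ν :=
    ⟨by rw [hν_def, Measure.bind_apply MeasurableSet.univ κ.measurable.aemeasurable]; simp⟩
  by_cases hR : ∫⁻ x, klDiv (κ x) r ∂μ = ⊤
  · rw [hR]; exact le_top
  -- a.e. x, κ x ≪ r and llr integrable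
  have hfin : ∀ᵐ x ∂μ, κ x ≪ r ∧ Integrable (llr (κ x) r) (κ x) := by
    have h1 := ae_lt_top (measurable_klDiv_kernel κ r) hR
    filter_upwards [h1] with x hx
    by_contra hc
    rw [klDiv, if_neg hc] at hx
    exact absurd hx (lt_irrefl _)
  -- ν ≪ r
  have hνr : ν ≪ r := by
    refine Measure.AbsolutelyContinuous.mk fun s hs hs0 => ?_
    rw [hν_def, Measure.bind_apply hs κ.measurable.aemeasurable]
    have h0 : (fun x => κ x s) =ᵐ[μ] 0 := by
      filter_upwards [hfin] with x hx
      simp [hx.1 hs0]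
    rw [lintegral_congr_ae h0]
    simp
  -- κ x ≪ ν a.e.
  have hrn_meas : Measurable (ν.rnDeriv r) := Measure.measurable_rnDeriv ν r
  set N : Set S := {y | ν.rnDeriv r y = 0} with hN_def
  have hN : MeasurableSet N := hrn_meas (measurableSet_singleton 0)
  have hνN : ν N = 0 := by
    conv_lhs => rw [← Measure.withDensity_rnDeriv_eq ν r hνr]
    rw [withDensity_apply _ hN,
      setLIntegral_congr_fun hN (fun y (hy : ν.rnDeriv r y = 0) => hy)]
    simp
  have hκN : ∀ᵐ x ∂μ, κ x N = 0 := by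
    have hbind : ∫⁻ x, κ x N ∂μ = 0 := by
      rw [← Measure.bind_apply hN κ.measurable.aemeasurable, ← hν_def]
      exact hνN
    have h := (lintegral_eq_zero_iff (κ.measurable_coe hN)).1 hbind
    filter_upwards [h] with x hx using hx
  have hACν : ∀ᵐ x ∂μ, κ x ≪ ν := by
    filter_upwards [hκN, hfin] with x hxN hx
    refine Measure.AbsolutelyContinuous.mk fun s hs hs0 => ?_
    have hg0 : ν.rnDeriv r =ᵐ[r.restrict s] 0 := by
      rw [← lintegral_eq_zero_iff hrn_meas]
      have : ∫⁻ y in s, ν.rnDeriv r y ∂r = 0 := by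
        rw [← withDensity_apply _ hs, Measure.withDensity_rnDeriv_eq ν r hνr]
        exact hs0
      exact this
    have hr0 : r (s \ N) = 0 := by
      have h2 : ∀ᵐ y ∂r, y ∈ s → ν.rnDeriv r y = 0 := by
        have := (ae_restrict_iff' hs).1 (hg0.mono fun y hy => by simpa using hy)
        exact this
      refine measure_mono_null (fun y hy => ?_) (ae_iff.1 h2)
      simp only [Set.mem_setOf_eq, Classical.not_imp]
      exact ⟨hy.1, hy.2⟩
    have h3 : κ x (s \ N) = 0 := hx.1 hr0
    have h4 : κ x (s ∩ N) = 0 := measure_mono_null Set.inter_subset_right hxN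
    have h5 : κ x s ≤ κ x (s ∩ N) + κ x (s \ N) := by
      refine (measure_mono ?_).trans (measure_union_le _ _)
      intro y hy
      by_cases hyN : y ∈ N
      exacts [Or.inl ⟨hy, hyN⟩, Or.inr ⟨hy, hyN⟩]
    rw [h3, h4, add_zero] at h5
    exact le_antisymm h5 zero_le
  -- chain rule decomposition
  have hdecomp : ∀ᵐ x ∂μ, llr (κ x) r =ᵐ[κ x] fun y => llr (κ x) ν y + llr ν r y := by
    filter_upwards [hfin, hACν] with x hx hxν
    have hmul := hx.1.ae_le (Measure.rnDeriv_mul_rnDeriv (μ := κ x) (ν := ν) (κ := r) hxν)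
    filter_upwards [hmul, Measure.rnDeriv_pos hxν, hxν.ae_le (Measure.rnDeriv_lt_top (κ x) ν),
      hxν.ae_le (Measure.rnDeriv_pos hνr), hx.1.ae_le (Measure.rnDeriv_lt_top ν r)]
      with y h1 h2 h3 h4 h5
    simp only [Pi.mul_apply] at h1
    rw [llr, llr, llr, ← h1, ENNReal.toReal_mul,
      Real.log_mul (ENNReal.toReal_ne_zero.2 ⟨h2.ne', h3.ne⟩)
        (ENNReal.toReal_ne_zero.2 ⟨h4.ne', h5.ne⟩)]
  have hllrνr_meas : Measurable (llr ν r) := measurable_llr ν r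
  -- positive part of llr ν r has finite lintegral wrt ν
  have hposbound : ∀ᵐ x ∂μ, ∫⁻ y, ENNReal.ofReal (max (llr ν r y) 0) ∂κ x
      ≤ klDiv (κ x) r + 2 := by
    filter_upwards [hfin, hACν, hdecomp] with x hx hxν hd
    have hstep : ∀ᵐ y ∂κ x, ENNReal.ofReal (max (llr ν r y) 0)
        ≤ ENNReal.ofReal (max (llr (κ x) r y) 0) + ENNReal.ofReal (max (- llr (κ x) ν y) 0) := by
      filter_upwards [hd] with y hy
      have h6 : llr ν r y ≤ max (llr (κ x) r y) 0 + max (- llr (κ x) ν y) 0 := by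
        have ha := le_max_left (llr (κ x) r y) 0
        have hb := le_max_left (- llr (κ x) ν y) 0
        have : llr ν r y = llr (κ x) r y - llr (κ x) ν y := by linarith [hy]
        linarith
      have h7 : max (llr ν r y) 0 ≤ max (llr (κ x) r y) 0 + max (- llr (κ x) ν y) 0 :=
        max_le h6 (add_nonneg (le_max_right _ _) (le_max_right _ _))
      calc ENNReal.ofReal (max (llr ν r y) 0)
          ≤ ENNReal.ofReal (max (llr (κ x) r y) 0 + max (- llr (κ x) ν y) 0) :=
            ENNReal.ofReal_le_ofReal h7
        _ = _ := ENNReal.ofReal_add (le_max_right _ _) (le_max_right _ _)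
    have hkl : klDiv (κ x) r = ENNReal.ofReal (∫ y, llr (κ x) r y ∂κ x) := by
      rw [klDiv, if_pos hx]
    calc ∫⁻ y, ENNReal.ofReal (max (llr ν r y) 0) ∂κ x
        ≤ ∫⁻ y, (ENNReal.ofReal (max (llr (κ x) r y) 0)
            + ENNReal.ofReal (max (- llr (κ x) ν y) 0)) ∂κ x := lintegral_mono_ae hstep
      _ = ∫⁻ y, ENNReal.ofReal (max (llr (κ x) r y) 0) ∂κ x
            + ∫⁻ y, ENNReal.ofReal (max (- llr (κ x) ν y) 0) ∂κ x :=
          lintegral_add_left ((measurable_llr _ _).max measurable_const).ennreal_ofReal _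
      _ ≤ (ENNReal.ofReal (∫ y, llr (κ x) r y ∂κ x) + 1) + 1 :=
          add_le_add (my_lintegral_pos_part_llr_le hx.1 hx.2) (my_lintegral_neg_part_llr_le hxν)
      _ = klDiv (κ x) r + 2 := by rw [hkl]; ring
  have hposfin : ∫⁻ y, ENNReal.ofReal (max (llr ν r y) 0) ∂ν ≠ ⊤ := by
    rw [hν_def, ← my_lintegral_bind μ κ (hllrνr_meas.max measurable_const).ennreal_ofReal]
    have hb := lintegral_mono_ae hposbound
    have h2 : ∫⁻ x, (klDiv (κ x) r + 2) ∂μ ≠ ⊤ := by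
      rw [lintegral_add_right _ measurable_const, lintegral_const]
      refine ENNReal.add_ne_top.2 ⟨hR, ?_⟩
      simp
    exact ne_top_of_le_ne_top h2 hb
  have hnegfin : ∫⁻ y, ENNReal.ofReal (max (- llr ν r y) 0) ∂ν ≠ ⊤ :=
    ne_top_of_le_ne_top ENNReal.one_ne_top (my_lintegral_neg_part_llr_le hνr)
  have habs : ∫⁻ y, (‖llr ν r y‖₊ : ℝ≥0∞) ∂ν ≠ ⊤ := by
    have hsum : ∀ y, (‖llr ν r y‖₊ : ℝ≥0∞)
        = ENNReal.ofReal (max (llr ν r y) 0) + ENNReal.ofReal (max (- llr ν r y) 0) := by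
      intro y
      rw [← enorm_eq_nnnorm, Real.enorm_eq_ofReal_abs, ← ENNReal.ofReal_add (le_max_right _ _) (le_max_right _ _)]
      congr 1
      rcases le_total (llr ν r y) 0 with h | h
      · rw [abs_of_nonpos h]; simp [max_eq_right h, max_eq_left (neg_nonneg.2 h)]
      · rw [abs_of_nonneg h]; simp [max_eq_left h, max_eq_right (neg_nonpos.2 h)]
    simp_rw [hsum]
    rw [lintegral_add_left (hllrνr_meas.max measurable_const).ennreal_ofReal]
    exact ENNReal.add_ne_top.2 ⟨hposfin, hnegfin⟩
  have hllrνr_int : Integrable (llr ν r) ν := by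
    refine ⟨hllrνr_meas.aestronglyMeasurable, ?_⟩
    rw [HasFiniteIntegral]
    exact habs.lt_top
  have hBx_int : ∀ᵐ x ∂μ, Integrable (llr ν r) (κ x) := by
    have hmeas : Measurable fun x => ∫⁻ y, (‖llr ν r y‖₊ : ℝ≥0∞) ∂κ x :=
      Measurable.lintegral_kernel hllrνr_meas.nnnorm.coe_nnreal_ennreal
    have hb : ∫⁻ x, (∫⁻ y, (‖llr ν r y‖₊ : ℝ≥0∞) ∂κ x) ∂μ ≠ ⊤ := by
      rw [my_lintegral_bind μ κ hllrνr_meas.nnnorm.coe_nnreal_ennreal, ← hν_def]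
      exact habs
    filter_upwards [ae_lt_top hmeas hb] with x hx
    refine ⟨hllrνr_meas.aestronglyMeasurable, ?_⟩
    rw [HasFiniteIntegral]
    exact hx
  have hCx_int : ∀ᵐ x ∂μ, Integrable (llr (κ x) ν) (κ x) := by
    filter_upwards [hfin, hBx_int, hdecomp] with x hx hB hd
    have h : llr (κ x) ν =ᵐ[κ x] fun y => llr (κ x) r y - llr ν r y := by
      filter_upwards [hd] with y hy
      linarith [hy]
    exact (hx.2.sub hB).congr h.symm
  -- the three real-valued functions
  set A : X → ℝ := fun x => ∫ y, gllr κ r x y ∂κ x with hA_def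
  set C : X → ℝ := fun x => ∫ y, gllr κ ν x y ∂κ x with hC_def
  set B : X → ℝ := fun x => ∫ y, llr ν r y ∂κ x with hB_def
  have hklr_eq : ∀ᵐ x ∂μ, klDiv (κ x) r = ENNReal.ofReal (A x) := by
    filter_upwards [hfin] with x hx
    exact klDiv_eq_ofReal_integral_gllr κ r hx.1 hx.2
  have hklν_eq : ∀ᵐ x ∂μ, klDiv (κ x) ν = ENNReal.ofReal (C x) := by
    filter_upwards [hACν, hCx_int] with x h1 h2
    exact klDiv_eq_ofReal_integral_gllr κ ν h1 h2
  have hA_eq : ∀ᵐ x ∂μ, A x = ∫ y, llr (κ x) r y ∂κ x := by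
    filter_upwards [hfin] with x hx
    exact (integral_congr_ae (llr_ae_eq_gllr κ r hx.1)).symm
  have hC_eq : ∀ᵐ x ∂μ, C x = ∫ y, llr (κ x) ν y ∂κ x := by
    filter_upwards [hACν] with x hx
    exact (integral_congr_ae (llr_ae_eq_gllr κ ν hx)).symm
  have hA0 : ∀ᵐ x ∂μ, 0 ≤ A x := by
    filter_upwards [hA_eq, hfin] with x hx h2
    rw [hx]
    exact my_integral_llr_nonneg h2.1 h2.2
  have hC0 : ∀ᵐ x ∂μ, 0 ≤ C x := by
    filter_upwards [hC_eq, hACν, hCx_int] with x hx h1 h2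
    rw [hx]
    exact my_integral_llr_nonneg h1 h2
  have hABC : ∀ᵐ x ∂μ, A x = C x + B x := by
    filter_upwards [hA_eq, hC_eq, hdecomp, hCx_int, hBx_int] with x hA hC hd hCi hBi
    rw [hA, integral_congr_ae hd, integral_add hCi hBi, hC, hB_def]
  have hA_meas : StronglyMeasurable A :=
    StronglyMeasurable.integral_kernel_prod_right (measurable_gllr κ r).stronglyMeasurable
  have hB_meas : StronglyMeasurable B :=
    StronglyMeasurable.integral_kernel_prod_right (f := fun _ y => llr ν r y)
      ((hllrνr_meas.comp measurable_snd).stronglyMeasurable)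
  have hA_int : Integrable A μ := by
    refine ⟨hA_meas.aestronglyMeasurable, ?_⟩
    rw [HasFiniteIntegral]
    have h : ∫⁻ x, (‖A x‖₊ : ℝ≥0∞) ∂μ = ∫⁻ x, klDiv (κ x) r ∂μ := by
      refine lintegral_congr_ae ?_
      filter_upwards [hklr_eq, hA0] with x h1 h2
      rw [h1, ← enorm_eq_nnnorm, Real.enorm_eq_ofReal h2]
    rw [show (∫⁻ a, ‖A a‖ₑ ∂μ) = _ from h]
    exact lt_top_iff_ne_top.2 hR
  have hB_int : Integrable B μ := by
    refine ⟨hB_meas.aestronglyMeasurable, ?_⟩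
    rw [HasFiniteIntegral]
    calc ∫⁻ x, (‖B x‖₊ : ℝ≥0∞) ∂μ
        ≤ ∫⁻ x, ∫⁻ y, (‖llr ν r y‖₊ : ℝ≥0∞) ∂κ x ∂μ :=
          lintegral_mono fun x => enorm_integral_le_lintegral_enorm _
      _ = ∫⁻ y, (‖llr ν r y‖₊ : ℝ≥0∞) ∂ν := by
          rw [my_lintegral_bind μ κ hllrνr_meas.nnnorm.coe_nnreal_ennreal, ← hν_def]
      _ < ⊤ := habs.lt_top
  have hC_int : Integrable C μ := by
    refine (hA_int.sub hB_int).congr ?_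
    filter_upwards [hABC] with x hx
    simp only [Pi.sub_apply]
    linarith
  have hB_nonneg : 0 ≤ ∫ x, B x ∂μ := by
    have h : ∫ x, B x ∂μ = ∫ y, llr ν r y ∂ν := by
      rw [hν_def]
      exact my_integral_bind μ κ hllrνr_meas (hν_def ▸ hllrνr_int)
    rw [h]
    exact my_integral_llr_nonneg hνr hllrνr_int
  calc ∫⁻ x, klDiv (κ x) ν ∂μ
      = ∫⁻ x, ENNReal.ofReal (C x) ∂μ := lintegral_congr_ae hklν_eq
    _ = ENNReal.ofReal (∫ x, C x ∂μ) := (ofReal_integral_eq_lintegral_ofReal hC_int hC0).symm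
    _ ≤ ENNReal.ofReal (∫ x, A x ∂μ) := by
        refine ENNReal.ofReal_le_ofReal ?_
        have h1 : ∫ x, C x ∂μ = ∫ x, A x ∂μ - ∫ x, B x ∂μ := by
          rw [← integral_sub hA_int hB_int]
          refine integral_congr_ae ?_
          filter_upwards [hABC] with x hx
          show C x = A x - B x
          linarith
        linarith
    _ = ∫⁻ x, ENNReal.ofReal (A x) ∂μ := ofReal_integral_eq_lintegral_ofReal hA_int hA0
    _ = ∫⁻ x, klDiv (κ x) r ∂μ := (lintegral_congr_ae hklr_eq).symm
end
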